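/- Let k, l, s, n be integers with 1 ≤ k ≤ s, 1 ≤ l ≤ s, s ≤ n and s < 2l. Then ∑_{j=0}^{k−1} (−1)^{k+j+1} · C(n+2k−s−1, k−j−1) · C(n−s+j, n−s) · C(n+j, 2l−1) = −∑_{i=2k−1}^{2l−1} (−1)^{i} · C(n−s+i, i) · C(2l−s−1, 2l−1−i) · C(i−k, k−1). -/

import Mathlib

open Finset

/-- Generalized binomial coefficient with integer upper index. -/
def DklAux.gch (r : ℤ) (m : ℕ) : ℤ :=
  if 0 ≤ r then (r.toNat.choose m : ℤ) else (-1) ^ m * (((m : ℤ) - 1 - r).toNat.choose m : ℤ)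

namespace DklAux

lemma neg_one_pow_congr {a b : ℕ} (h : a % 2 = b % 2) : (-1 : ℤ) ^ a = (-1) ^ b := by
  conv_lhs => rw [← Nat.div_add_mod a 2]
  conv_rhs => rw [← Nat.div_add_mod b 2]
  rw [h, pow_add, pow_add, pow_mul, pow_mul]
  norm_num

lemma gch_pascal (r : ℤ) (m : ℕ) :
    gch (r + 1) (m + 1) = gch r (m + 1) + gch r m := by
  rcases le_or_gt 0 r with h | h
  · have h1 : (0:ℤ) ≤ r + 1 := by omega
    have e : (r + 1).toNat = r.toNat + 1 := by omega
    simp only [gch, if_pos h, if_pos h1, e, Nat.choose_succ_succ]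
    push_cast; ring
  · rcases lt_or_ge r (-1) with h2 | h2
    · -- r ≤ -2
      obtain ⟨c, hc⟩ : ∃ c : ℕ, r = -2 - (c : ℤ) := ⟨(-2 - r).toNat, by omega⟩
      subst hc
      have e1 : ¬ (0:ℤ) ≤ -2 - (c:ℤ) + 1 := by omega
      have e2 : ¬ (0:ℤ) ≤ -2 - (c:ℤ) := by omega
      have t1 : (((m+1 : ℕ) : ℤ) - 1 - (-2 - (c:ℤ) + 1)).toNat = m + 1 + c := by omega
      have t2 : (((m+1 : ℕ) : ℤ) - 1 - (-2 - (c:ℤ))).toNat = m + 2 + c := by omega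
      have t3 : ((m : ℤ) - 1 - (-2 - (c:ℤ))).toNat = m + 1 + c := by omega
      simp only [gch, if_neg e1, if_neg e2]
      rw [t1, t2, t3]
      have hps : (m + 2 + c).choose (m+1) = (m + 1 + c).choose m + (m + 1 + c).choose (m+1) := by
        rw [show m + 2 + c = (m + 1 + c) + 1 by ring]
        exact Nat.choose_succ_succ (m + 1 + c) m
      rw [hps]
      push_cast; ring
    · have hr : r = -1 := by omega
      subst hr
      have e1 : ¬ (0:ℤ) ≤ (-1 : ℤ) := by omega
      have t1 : ((-1 : ℤ) + 1) = 0 := by ring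
      have t2 : (((m+1 : ℕ) : ℤ) - 1 - (-1)).toNat = m + 1 := by omega
      have t3 : ((m : ℤ) - 1 - (-1)).toNat = m := by omega
      simp only [gch, t1, if_pos (le_refl (0:ℤ)), if_neg e1, t2, t3]
      simp [Nat.choose_self, pow_succ]

lemma sumF (A : ℕ) : ∀ (B m : ℕ),
    ∑ u ∈ range (m + 1), (-1 : ℤ) ^ u * ((A + u).choose u : ℤ) * (B.choose (m - u) : ℤ)
      = gch ((B : ℤ) - A - 1) m := by
  intro B
  induction B with
  | zero =>
    intro m
    rw [Finset.sum_eq_single m]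
    · have e : ¬ (0:ℤ) ≤ ((0:ℕ):ℤ) - A - 1 := by omega
      have t : ((m : ℤ) - 1 - (((0:ℕ):ℤ) - A - 1)).toNat = A + m := by omega
      simp only [gch, if_neg e, t, Nat.sub_self, Nat.choose_zero_right, Nat.cast_one, mul_one, Nat.add_comm A m]
    · intro b hb hbm
      have : m - b ≠ 0 := by simp at hb; omega
      obtain ⟨c, hc⟩ := Nat.exists_eq_succ_of_ne_zero this
      rw [hc]
      simp
    · intro h; exact absurd (self_mem_range_succ m) h
  | succ B ih =>
    intro m
    cases m with
    | zero =>
      rw [show (0:ℕ)+1 = 1 from rfl, Finset.sum_range_one]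
      simp only [pow_zero, Nat.add_zero, Nat.choose_zero_right, Nat.sub_zero,
        Nat.choose_self, Nat.cast_one, one_mul, mul_one]
      have e : (0:ℤ) ≤ ((B+1 : ℕ) : ℤ) - A - 1 ∨ ¬ (0:ℤ) ≤ ((B+1 : ℕ) : ℤ) - A - 1 := em _
      unfold gch
      rcases e with h | h
      · rw [if_pos h]; simp
      · rw [if_neg h]; simp
    | succ m' =>
      rw [Finset.sum_range_succ]
      have hsplit : ∀ u ∈ range (m' + 1),
          (-1:ℤ)^u * ((A+u).choose u : ℤ) * ((B+1).choose (m'+1-u) : ℤ)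
            = ((-1:ℤ)^u * ((A+u).choose u : ℤ) * ((B).choose (m'+1-u) : ℤ))
              + ((-1:ℤ)^u * ((A+u).choose u : ℤ) * ((B).choose (m'-u) : ℤ)) := by
        intro u hu
        have hu' : u ≤ m' := by simpa [Nat.lt_succ_iff] using hu
        have e : m' + 1 - u = (m' - u) + 1 := by omega
        rw [e, Nat.choose_succ_succ]
        push_cast; ring
      rw [Finset.sum_congr rfl hsplit, Finset.sum_add_distrib]
      have h1 := ih (m'+1)
      rw [Finset.sum_range_succ] at h1
      have h2 := ih m'
      have h3 := gch_pascal ((B:ℤ) - A - 1) m'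
      have harg : ((B+1 : ℕ) : ℤ) - A - 1 = ((B:ℤ) - A - 1) + 1 := by push_cast; ring
      rw [harg, h3]
      simp only [Nat.sub_self, Nat.choose_zero_right, Nat.cast_one, mul_one] at *
      linarith [h1, h2]

lemma sumF_pos (A c m : ℕ) :
    ∑ u ∈ range (m + 1), (-1 : ℤ) ^ u * ((A + u).choose u : ℤ) * ((A + 1 + c).choose (m - u) : ℤ)
      = (c.choose m : ℤ) := by
  rw [sumF]
  have h : ((A + 1 + c : ℕ) : ℤ) - A - 1 = (c : ℤ) := by push_cast; ring
  rw [h]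
  unfold gch
  rw [if_pos (by positivity), Int.toNat_natCast]

lemma sumF_neg (A B m x : ℕ) (h : A + m = B + x) :
    ∑ u ∈ range (m + 1), (-1 : ℤ) ^ u * ((A + u).choose u : ℤ) * (B.choose (m - u) : ℤ)
      = (-1) ^ m * (x.choose m : ℤ) := by
  rw [sumF]
  unfold gch
  rcases le_or_gt 0 ((B : ℤ) - A - 1) with hba | hba
  · rw [if_pos hba]
    have hx : x < m := by omega
    have h1 : ((B : ℤ) - A - 1).toNat < m := by omega
    rw [Nat.choose_eq_zero_of_lt hx, Nat.choose_eq_zero_of_lt h1]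
    simp
  · rw [if_neg (by omega)]
    have e : ((m : ℤ) - 1 - ((B : ℤ) - A - 1)).toNat = x := by omega
    rw [e]

lemma chmul (M j t : ℕ) (h : t ≤ j) :
    (M + j).choose j * (j.choose t) = (M + t).choose t * ((M + j).choose (j - t)) := by
  have h2 : j - t ≤ j := Nat.sub_le j t
  have key := Nat.choose_mul (n := M + j) h2
  rw [Nat.choose_symm h] at key
  rw [key]
  have e1 : M + j - (j - t) = M + t := by omega
  have e2 : j - (j - t) = t := by omega
  rw [e1, e2, Nat.mul_comm]

lemma sumP (k i : ℕ) (hk : 1 ≤ k) (hik : k ≤ i) :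
    ∑ b ∈ range k, (-1 : ℤ) ^ (k - 1 - b) * ((2 * k - 2 - b).choose (k - 1 - b) : ℤ) * (i.choose b : ℤ)
      = ((i - k).choose (k - 1) : ℤ) := by
  rw [← Finset.sum_range_reflect]
  have hcongr : ∀ c ∈ range k,
      (-1 : ℤ) ^ (k - 1 - (k - 1 - c)) * ((2 * k - 2 - (k - 1 - c)).choose (k - 1 - (k - 1 - c)) : ℤ)
          * (i.choose (k - 1 - c) : ℤ)
        = (-1 : ℤ) ^ c * (((k - 1) + c).choose c : ℤ) * (i.choose ((k - 1) - c) : ℤ) := by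
    intro c hc
    have hc' : c < k := mem_range.mp hc
    have e1 : k - 1 - (k - 1 - c) = c := by omega
    have e2 : 2 * k - 2 - (k - 1 - c) = (k - 1) + c := by omega
    rw [e1, e2]
  rw [Finset.sum_congr rfl hcongr, show k = (k - 1) + 1 by omega]
  simp only [Nat.add_sub_cancel]
  rw [sumF]
  unfold gch
  rw [if_pos (by omega)]
  congr 2
  omega

lemma inner1 (M k t : ℕ) (ht : t < k) :
    ∑ j ∈ range k,
        (-1 : ℤ) ^ (k + j + 1) * ((M + 2 * k - 1).choose (k - 1 - j) : ℤ) *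
          ((M + j).choose j : ℤ) * (j.choose t : ℤ)
      = (-1 : ℤ) ^ (k + t + 1) * ((M + t).choose t : ℤ) * ((2 * k - 2 - t).choose (k - 1 - t) : ℤ) := by
  have hres : ∑ j ∈ range k,
        (-1 : ℤ) ^ (k + j + 1) * ((M + 2 * k - 1).choose (k - 1 - j) : ℤ) *
          ((M + j).choose j : ℤ) * (j.choose t : ℤ)
      = ∑ j ∈ Finset.Ico t k,
        (-1 : ℤ) ^ (k + j + 1) * ((M + 2 * k - 1).choose (k - 1 - j) : ℤ) *
          ((M + j).choose j : ℤ) * (j.choose t : ℤ) := by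
    rw [Finset.range_eq_Ico]
    refine (Finset.sum_subset (Finset.Ico_subset_Ico (Nat.zero_le t) le_rfl) ?_).symm
    intro x hx hnx
    have hxt : x < t := by
      simp only [Finset.mem_Ico] at hx hnx
      omega
    rw [Nat.choose_eq_zero_of_lt hxt]
    simp
  rw [hres, Finset.sum_Ico_eq_sum_range, show k - t = (k - 1 - t) + 1 by omega]
  have hcongr : ∀ u ∈ range ((k - 1 - t) + 1),
      (-1 : ℤ) ^ (k + (t + u) + 1) * ((M + 2 * k - 1).choose (k - 1 - (t + u)) : ℤ) *
          ((M + (t + u)).choose (t + u) : ℤ) * ((t + u).choose t : ℤ)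
        = ((-1 : ℤ) ^ (k + t + 1) * ((M + t).choose t : ℤ)) *
            ((-1 : ℤ) ^ u * ((M + t + u).choose u : ℤ) *
              (((M + t) + 1 + (2 * k - 2 - t)).choose ((k - 1 - t) - u) : ℤ)) := by
    intro u hu
    have hc := chmul M (t + u) t (Nat.le_add_right t u)
    have hc' : ((M + (t + u)).choose (t + u) : ℤ) * ((t + u).choose t : ℤ)
        = ((M + t).choose t : ℤ) * ((M + t + u).choose u : ℤ) := by
      rw [show t + u - t = u by omega, ← Nat.add_assoc] at hc
      rw [← Nat.add_assoc M t u]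
      exact_mod_cast congrArg (Nat.cast : ℕ → ℤ) hc
    have a1 : M + 2 * k - 1 = (M + t) + 1 + (2 * k - 2 - t) := by omega
    have a2 : k - 1 - (t + u) = (k - 1 - t) - u := by omega
    have a3 : k + (t + u) + 1 = (k + t + 1) + u := by ring
    rw [a1, a2, a3, pow_add]
    linear_combination ((-1 : ℤ) ^ (k + t + 1) * (-1 : ℤ) ^ u *
      (((M + t) + 1 + (2 * k - 2 - t)).choose ((k - 1 - t) - u) : ℤ)) * hc'
  rw [Finset.sum_congr rfl hcongr, ← Finset.mul_sum, sumF_pos (M + t) (2 * k - 2 - t) (k - 1 - t)]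

lemma inner2 (M B l b x : ℕ) (hb : b < 2 * l) (harith : M + b + (2 * l - 1 - b) = B + x) :
    ∑ i ∈ range (2 * l),
        (-1 : ℤ) ^ i * ((M + i).choose i : ℤ) * (B.choose (2 * l - 1 - i) : ℤ) * (i.choose b : ℤ)
      = (-1 : ℤ) ^ b * ((M + b).choose b : ℤ) *
          ((-1 : ℤ) ^ (2 * l - 1 - b) * (x.choose (2 * l - 1 - b) : ℤ)) := by
  have hres : ∑ i ∈ range (2 * l),
        (-1 : ℤ) ^ i * ((M + i).choose i : ℤ) * (B.choose (2 * l - 1 - i) : ℤ) * (i.choose b : ℤ)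
      = ∑ i ∈ Finset.Ico b (2 * l),
        (-1 : ℤ) ^ i * ((M + i).choose i : ℤ) * (B.choose (2 * l - 1 - i) : ℤ) * (i.choose b : ℤ) := by
    rw [Finset.range_eq_Ico]
    refine (Finset.sum_subset (Finset.Ico_subset_Ico (Nat.zero_le b) le_rfl) ?_).symm
    intro i hi hni
    have hib : i < b := by
      simp only [Finset.mem_Ico] at hi hni
      omega
    rw [Nat.choose_eq_zero_of_lt hib]
    simp
  rw [hres, Finset.sum_Ico_eq_sum_range, show 2 * l - b = (2 * l - 1 - b) + 1 by omega]
  have hcongr : ∀ u ∈ range ((2 * l - 1 - b) + 1),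
      (-1 : ℤ) ^ (b + u) * ((M + (b + u)).choose (b + u) : ℤ) *
          (B.choose (2 * l - 1 - (b + u)) : ℤ) * ((b + u).choose b : ℤ)
        = ((-1 : ℤ) ^ b * ((M + b).choose b : ℤ)) *
            ((-1 : ℤ) ^ u * ((M + b + u).choose u : ℤ) * (B.choose ((2 * l - 1 - b) - u) : ℤ)) := by
    intro u hu
    have hc := chmul M (b + u) b (Nat.le_add_right b u)
    have hc' : ((M + (b + u)).choose (b + u) : ℤ) * ((b + u).choose b : ℤ)
        = ((M + b).choose b : ℤ) * ((M + b + u).choose u : ℤ) := by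
      rw [show b + u - b = u by omega, ← Nat.add_assoc] at hc
      rw [← Nat.add_assoc M b u]
      exact_mod_cast congrArg (Nat.cast : ℕ → ℤ) hc
    have a2 : 2 * l - 1 - (b + u) = (2 * l - 1 - b) - u := by omega
    rw [a2, pow_add]
    linear_combination ((-1 : ℤ) ^ b * (-1 : ℤ) ^ u * (B.choose ((2 * l - 1 - b) - u) : ℤ)) * hc'
  rw [Finset.sum_congr rfl hcongr, ← Finset.mul_sum,
    sumF_neg (M + b) B (2 * l - 1 - b) x (by omega)]

end DklAux


/-- Non-alternating form of the sum `D_{k,l}` (case `s < 2l`):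
`∑_{j=0}^{k−1} (−1)^{k+j+1} C(n+2k−s−1,k−j−1) C(n−s+j,n−s) C(n+j,2l−1)
  = −∑_{i=2k−1}^{2l−1} (−1)^i C(n−s+i,i) C(2l−s−1,2l−1−i) C(i−k,k−1)`. -/
theorem Dkl_nonalternating_case2 (k l s n : ℕ)
    (hk1 : 1 ≤ k) (hks : k ≤ s) (hl1 : 1 ≤ l) (hls : l ≤ s)
    (hsn : s ≤ n) (hs2l : s < 2 * l) :
    ∑ j ∈ Finset.range k,
      (-1 : ℤ) ^ (k + j + 1) * (Nat.choose (n + 2 * k - s - 1) (k - j - 1) : ℤ) *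
        (Nat.choose (n - s + j) (n - s) : ℤ) * (Nat.choose (n + j) (2 * l - 1) : ℤ)
      = -∑ i ∈ Finset.Icc (2 * k - 1) (2 * l - 1),
          (-1 : ℤ) ^ i * (Nat.choose (n - s + i) i : ℤ) *
            (Nat.choose (2 * l - s - 1) (2 * l - 1 - i) : ℤ) *
            (Nat.choose (i - k) (k - 1) : ℤ) := by
  set M := n - s with hM
  have hL : (∑ j ∈ Finset.range k,
      (-1 : ℤ) ^ (k + j + 1) * ((n + 2 * k - s - 1).choose (k - j - 1) : ℤ) *
        ((M + j).choose M : ℤ) * ((n + j).choose (2 * l - 1) : ℤ))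
      = ∑ t ∈ Finset.range k,
          (-1 : ℤ) ^ (k + t + 1) * ((M + t).choose t : ℤ) *
            ((2 * k - 2 - t).choose (k - 1 - t) : ℤ) * (n.choose (2 * l - 1 - t) : ℤ) := by
    have step1 : ∀ j ∈ Finset.range k,
        (-1 : ℤ) ^ (k + j + 1) * ((n + 2 * k - s - 1).choose (k - j - 1) : ℤ) *
          ((M + j).choose M : ℤ) * ((n + j).choose (2 * l - 1) : ℤ)
        = ∑ t ∈ Finset.range (2 * l),
            ((-1 : ℤ) ^ (k + j + 1) * ((M + 2 * k - 1).choose (k - 1 - j) : ℤ) *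
              ((M + j).choose j : ℤ) * (j.choose t : ℤ)) * (n.choose (2 * l - 1 - t) : ℤ) := by
      intro j hj
      have e1 : n + 2 * k - s - 1 = M + 2 * k - 1 := by omega
      have e2 : k - j - 1 = k - 1 - j := by omega
      have e4 : (M + j).choose M = (M + j).choose j := by
        have h := Nat.choose_symm (Nat.le_add_left j M)
        rwa [Nat.add_sub_cancel] at h
      have e5 : ((n + j).choose (2 * l - 1) : ℤ)
          = ∑ t ∈ Finset.range (2 * l), (j.choose t : ℤ) * (n.choose (2 * l - 1 - t) : ℤ) := by
        have e5n : (n + j).choose (2 * l - 1)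
            = ∑ t ∈ Finset.range (2 * l), j.choose t * n.choose (2 * l - 1 - t) := by
          rw [show n + j = j + n by ring, Nat.add_choose_eq,
            Finset.Nat.sum_antidiagonal_eq_sum_range_succ_mk, Nat.succ_eq_add_one,
            show 2 * l - 1 + 1 = 2 * l by omega]
        rw [e5n]
        push_cast
        rfl
      rw [e1, e2, e4, e5, Finset.mul_sum]
      exact Finset.sum_congr rfl fun t ht => by ring
    calc (∑ j ∈ Finset.range k,
        (-1 : ℤ) ^ (k + j + 1) * ((n + 2 * k - s - 1).choose (k - j - 1) : ℤ) *
          ((M + j).choose M : ℤ) * ((n + j).choose (2 * l - 1) : ℤ))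
        = ∑ j ∈ Finset.range k, ∑ t ∈ Finset.range (2 * l),
            ((-1 : ℤ) ^ (k + j + 1) * ((M + 2 * k - 1).choose (k - 1 - j) : ℤ) *
              ((M + j).choose j : ℤ) * (j.choose t : ℤ)) * (n.choose (2 * l - 1 - t) : ℤ) :=
          Finset.sum_congr rfl step1
      _ = ∑ t ∈ Finset.range (2 * l), ∑ j ∈ Finset.range k,
            ((-1 : ℤ) ^ (k + j + 1) * ((M + 2 * k - 1).choose (k - 1 - j) : ℤ) *
              ((M + j).choose j : ℤ) * (j.choose t : ℤ)) * (n.choose (2 * l - 1 - t) : ℤ) :=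
          Finset.sum_comm
      _ = ∑ t ∈ Finset.range k, ∑ j ∈ Finset.range k,
            ((-1 : ℤ) ^ (k + j + 1) * ((M + 2 * k - 1).choose (k - 1 - j) : ℤ) *
              ((M + j).choose j : ℤ) * (j.choose t : ℤ)) * (n.choose (2 * l - 1 - t) : ℤ) := by
          refine (Finset.sum_subset (Finset.range_subset_range.mpr (by omega : k ≤ 2 * l)) ?_).symm
          intro t htl htk
          refine Finset.sum_eq_zero fun j hj => ?_
          have hjt : j < t := by
            simp only [Finset.mem_range] at htl htk hj
            omega
          rw [Nat.choose_eq_zero_of_lt hjt]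
          simp
      _ = ∑ t ∈ Finset.range k,
            (∑ j ∈ Finset.range k,
              (-1 : ℤ) ^ (k + j + 1) * ((M + 2 * k - 1).choose (k - 1 - j) : ℤ) *
                ((M + j).choose j : ℤ) * (j.choose t : ℤ)) * (n.choose (2 * l - 1 - t) : ℤ) := by
          refine Finset.sum_congr rfl fun t ht => ?_
          rw [Finset.sum_mul]
      _ = ∑ t ∈ Finset.range k,
            (-1 : ℤ) ^ (k + t + 1) * ((M + t).choose t : ℤ) *
              ((2 * k - 2 - t).choose (k - 1 - t) : ℤ) * (n.choose (2 * l - 1 - t) : ℤ) := by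
          refine Finset.sum_congr rfl fun t ht => ?_
          rw [DklAux.inner1 M k t (Finset.mem_range.mp ht)]
  have hR : (∑ i ∈ Finset.Icc (2 * k - 1) (2 * l - 1),
      (-1 : ℤ) ^ i * ((M + i).choose i : ℤ) *
        ((2 * l - s - 1).choose (2 * l - 1 - i) : ℤ) * ((i - k).choose (k - 1) : ℤ))
      = ∑ b ∈ Finset.range k,
          (-1 : ℤ) ^ (k + b) * ((M + b).choose b : ℤ) *
            ((2 * k - 2 - b).choose (k - 1 - b) : ℤ) * (n.choose (2 * l - 1 - b) : ℤ) := by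
    calc (∑ i ∈ Finset.Icc (2 * k - 1) (2 * l - 1),
        (-1 : ℤ) ^ i * ((M + i).choose i : ℤ) *
          ((2 * l - s - 1).choose (2 * l - 1 - i) : ℤ) * ((i - k).choose (k - 1) : ℤ))
        = ∑ i ∈ Finset.range (2 * l),
            (-1 : ℤ) ^ i * ((M + i).choose i : ℤ) *
              ((2 * l - s - 1).choose (2 * l - 1 - i) : ℤ) * ((i - k).choose (k - 1) : ℤ) := by
          refine Finset.sum_subset ?_ ?_
          · intro x hx
            simp only [Finset.mem_Icc] at hx
            exact Finset.mem_range.mpr (by omega)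
          · intro x hxr hxn
            simp only [Finset.mem_range] at hxr
            simp only [Finset.mem_Icc] at hxn
            rcases lt_or_ge x s with hxs | hxs
            · rw [Nat.choose_eq_zero_of_lt (show 2 * l - s - 1 < 2 * l - 1 - x by omega)]
              push_cast; ring
            · rw [Nat.choose_eq_zero_of_lt (show x - k < k - 1 by omega)]
              simp
      _ = ∑ i ∈ Finset.range (2 * l),
            (-1 : ℤ) ^ i * ((M + i).choose i : ℤ) *
              ((2 * l - s - 1).choose (2 * l - 1 - i) : ℤ) *
              (∑ b ∈ Finset.range k,
                (-1 : ℤ) ^ (k - 1 - b) * ((2 * k - 2 - b).choose (k - 1 - b) : ℤ) *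
                  (i.choose b : ℤ)) := by
          refine Finset.sum_congr rfl fun i hi => ?_
          rcases lt_or_ge i s with his | his
          · rw [Nat.choose_eq_zero_of_lt (show 2 * l - s - 1 < 2 * l - 1 - i by omega)]
            push_cast; ring
          · rw [DklAux.sumP k i hk1 (le_trans hks his)]
      _ = ∑ i ∈ Finset.range (2 * l), ∑ b ∈ Finset.range k,
            ((-1 : ℤ) ^ i * ((M + i).choose i : ℤ) *
              ((2 * l - s - 1).choose (2 * l - 1 - i) : ℤ)) *
              ((-1 : ℤ) ^ (k - 1 - b) * ((2 * k - 2 - b).choose (k - 1 - b) : ℤ) *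
                (i.choose b : ℤ)) := by
          refine Finset.sum_congr rfl fun i hi => ?_
          rw [Finset.mul_sum]
      _ = ∑ b ∈ Finset.range k, ∑ i ∈ Finset.range (2 * l),
            ((-1 : ℤ) ^ i * ((M + i).choose i : ℤ) *
              ((2 * l - s - 1).choose (2 * l - 1 - i) : ℤ)) *
              ((-1 : ℤ) ^ (k - 1 - b) * ((2 * k - 2 - b).choose (k - 1 - b) : ℤ) *
                (i.choose b : ℤ)) := Finset.sum_comm
      _ = ∑ b ∈ Finset.range k,
            ((-1 : ℤ) ^ (k - 1 - b) * ((2 * k - 2 - b).choose (k - 1 - b) : ℤ)) *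
              (∑ i ∈ Finset.range (2 * l),
                (-1 : ℤ) ^ i * ((M + i).choose i : ℤ) *
                  ((2 * l - s - 1).choose (2 * l - 1 - i) : ℤ) * (i.choose b : ℤ)) := by
          refine Finset.sum_congr rfl fun b hb => ?_
          rw [Finset.mul_sum]
          exact Finset.sum_congr rfl fun i hi => by ring
      _ = ∑ b ∈ Finset.range k,
            ((-1 : ℤ) ^ (k - 1 - b) * ((2 * k - 2 - b).choose (k - 1 - b) : ℤ)) *
              ((-1 : ℤ) ^ b * ((M + b).choose b : ℤ) *
                ((-1 : ℤ) ^ (2 * l - 1 - b) * (n.choose (2 * l - 1 - b) : ℤ))) := by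
          refine Finset.sum_congr rfl fun b hb => ?_
          have hbk := Finset.mem_range.mp hb
          rw [DklAux.inner2 M (2 * l - s - 1) l b n (by omega) (by omega)]
      _ = ∑ b ∈ Finset.range k,
            (-1 : ℤ) ^ (k + b) * ((M + b).choose b : ℤ) *
              ((2 * k - 2 - b).choose (k - 1 - b) : ℤ) * (n.choose (2 * l - 1 - b) : ℤ) := by
          refine Finset.sum_congr rfl fun b hb => ?_
          have hbk := Finset.mem_range.mp hb
          have hsign : (-1 : ℤ) ^ (k - 1 - b) * ((-1 : ℤ) ^ b * (-1 : ℤ) ^ (2 * l - 1 - b))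
              = (-1 : ℤ) ^ (k + b) := by
            rw [← pow_add, ← pow_add]
            exact DklAux.neg_one_pow_congr (by omega)
          rw [← hsign]
          ring
  rw [hL, hR]
  have hterm : ∀ t ∈ Finset.range k,
      (-1 : ℤ) ^ (k + t + 1) * ((M + t).choose t : ℤ) *
        ((2 * k - 2 - t).choose (k - 1 - t) : ℤ) * (n.choose (2 * l - 1 - t) : ℤ)
      = -((-1 : ℤ) ^ (k + t) * ((M + t).choose t : ℤ) *
          ((2 * k - 2 - t).choose (k - 1 - t) : ℤ) * (n.choose (2 * l - 1 - t) : ℤ)) := by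
    intro t ht
    rw [pow_succ]
    ring
  rw [Finset.sum_congr rfl hterm]
  rw [Finset.sum_neg_distrib]
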